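/- Let G be a finite bipartite graph and let M_1, …, M_k be a partition of B ∪ W into bimodules of G, with quotient graph H. If C is the vertex set of a biclique of G, then Corr(C) is the vertex set of a biclique of H, and there exists a maximal biclique C' of H such that C ⊆ Rroc(C'). -/
import Mathlib


open Finset

/-- A finite bipartite graph: black vertices `B`, white vertices `W` (disjoint finite sets),
and an edge set `E ⊆ B × W`. -/
structure BipGraph (V : Type) [DecidableEq V] where
  B : Finset V
  W : Finset V
  disj : Disjoint B W
  E : Set (V × V)
  E_sub : ∀ e ∈ E, e.1 ∈ B ∧ e.2 ∈ W

variable {V : Type} [DecidableEq V]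

/-- `(S, T)` is a biclique of `G`. -/
def IsBiclique (G : BipGraph V) (S T : Finset V) : Prop :=
  S ⊆ G.B ∧ T ⊆ G.W ∧ ∀ b ∈ S, ∀ w ∈ T, (b, w) ∈ G.E

/-- `(b, w)` is a bisize of `G`: `G` contains a biclique of size `(b, w)`. -/
def Bisize (G : BipGraph V) (p : ℕ × ℕ) : Prop :=
  ∃ S T, IsBiclique G S T ∧ S.card = p.1 ∧ T.card = p.2

/-- `Dominates p q` : `p` dominates `q`, i.e. `q.1 ≤ p.1` and `q.2 ≤ p.2`. -/
def Dominates (p q : ℕ × ℕ) : Prop := q.1 ≤ p.1 ∧ q.2 ≤ p.2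

/-- A maxbisize of `G` : a bisize not strictly dominated by another bisize. -/
def MaxBisize (G : BipGraph V) (p : ℕ × ℕ) : Prop :=
  Bisize G p ∧ ∀ q, Bisize G q → Dominates q p → q = p

/-- `DD G` is the set of maxbisizes of `G` (denoted `D(G)` in the paper). -/
def DD (G : BipGraph V) : Set (ℕ × ℕ) := {p | MaxBisize G p}

/-- `Dom X` : the elements of `X` not strictly dominated by another element of `X`. -/
def Dom (X : Set (ℕ × ℕ)) : Set (ℕ × ℕ) := {p ∈ X | ∀ q ∈ X, Dominates q p → q = p}

/-- The induced subgraph `G[M]`. -/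
def induce (G : BipGraph V) (M : Finset V) : BipGraph V where
  B := G.B ∩ M
  W := G.W ∩ M
  disj := G.disj.mono inter_subset_left inter_subset_left
  E := {e ∈ G.E | e.1 ∈ M ∧ e.2 ∈ M}
  E_sub := fun e he =>
    ⟨mem_inter.mpr ⟨(G.E_sub e he.1).1, he.2.1⟩, mem_inter.mpr ⟨(G.E_sub e he.1).2, he.2.2⟩⟩

/-- `X` is nonadjacent to `Y` : no vertex of `X` is adjacent to a vertex of `Y`. -/
def Nonadj (G : BipGraph V) (X Y : Finset V) : Prop :=
  ∀ x ∈ X, ∀ y ∈ Y, (x, y) ∉ G.E ∧ (y, x) ∉ G.E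

/-- `X` is fully adjacent to `Y` : every black vertex of `X` is adjacent to every white
vertex of `Y` and every white vertex of `X` is adjacent to every black vertex of `Y`. -/
def FullyAdj (G : BipGraph V) (X Y : Finset V) : Prop :=
  (∀ b ∈ X ∩ G.B, ∀ w ∈ Y ∩ G.W, (b, w) ∈ G.E) ∧
  (∀ b ∈ Y ∩ G.B, ∀ w ∈ X ∩ G.W, (b, w) ∈ G.E)

/-- `X` is left adjacent to `Y` : every black vertex of `X` is adjacent to every white
vertex of `Y` and no white vertex of `X` is adjacent to a black vertex of `Y`. -/
def LeftAdj (G : BipGraph V) (X Y : Finset V) : Prop :=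
  (∀ b ∈ X ∩ G.B, ∀ w ∈ Y ∩ G.W, (b, w) ∈ G.E) ∧
  (∀ b ∈ Y ∩ G.B, ∀ w ∈ X ∩ G.W, (b, w) ∉ G.E)

open Classical in
/-- `X ⊕ Y` with the convention `∅ ⊕ X = X ⊕ ∅ = X`. -/
noncomputable def oplus (X Y : Set (ℕ × ℕ)) : Set (ℕ × ℕ) :=
  if X = ∅ then Y else if Y = ∅ then X
  else {p | ∃ x ∈ X, ∃ y ∈ Y, p = x + y}

/-- `→_w^z X`. -/
def shiftW (z : ℕ) (X : Set (ℕ × ℕ)) : Set (ℕ × ℕ) := {p | ∃ q ∈ X, p = (q.1, q.2 + z)}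

/-- `→_b^z X`. -/
def shiftB (z : ℕ) (X : Set (ℕ × ℕ)) : Set (ℕ × ℕ) := {p | ∃ q ∈ X, p = (q.1 + z, q.2)}

/-- A bimodule of `G`. -/
def Bimodule (G : BipGraph V) (M : Finset V) : Prop :=
  M ⊆ G.B ∪ G.W ∧ ∀ v ∈ (G.B ∪ G.W) \ M, Nonadj G {v} M ∨ FullyAdj G {v} M

/-- The quotient graph of `G` by a family `M` of bimodules: vertex `(i, true)` is the
black vertex `bᵢ` (present when `Mᵢ ∩ B ≠ ∅`), `(i, false)` the white vertex `wᵢ`. -/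
def quotientGraph (G : BipGraph V) {k : ℕ} (M : Fin k → Finset V) :
    BipGraph (Fin k × Bool) where
  B := Finset.univ.filter fun p => p.2 = true ∧ (M p.1 ∩ G.B).Nonempty
  W := Finset.univ.filter fun p => p.2 = false ∧ (M p.1 ∩ G.W).Nonempty
  disj := by
    rw [Finset.disjoint_left]
    intro p hp hq
    simp only [Finset.mem_filter, Finset.mem_univ, true_and] at hp hq
    rw [hp.1] at hq
    exact Bool.noConfusion hq.1
  E := {e | e.1.2 = true ∧ e.2.2 = false ∧
       ∃ x ∈ M e.1.1 ∩ G.B, ∃ y ∈ M e.2.1 ∩ G.W, (x, y) ∈ G.E}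
  E_sub := fun e he => by
    obtain ⟨h1, h2, x, hx, y, hy, _⟩ := he
    constructor <;> simp only [Finset.mem_filter, Finset.mem_univ, true_and]
    · exact ⟨h1, ⟨x, hx⟩⟩
    · exact ⟨h2, ⟨y, hy⟩⟩

/-- `Rroc S` for a set `S` of vertices of the quotient graph. -/
def Rroc (G : BipGraph V) {k : ℕ} (M : Fin k → Finset V)
    (S : Finset (Fin k × Bool)) : Finset V :=
  S.biUnion fun p => if p.2 then M p.1 ∩ G.B else M p.1 ∩ G.W

/-- `Corr S` for a set `S` of vertices of `G`. -/
def Corr (G : BipGraph V) {k : ℕ} (M : Fin k → Finset V) (C : Finset V) :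
    Finset (Fin k × Bool) :=
  Finset.univ.filter fun p =>
    if p.2 then (C ∩ M p.1 ∩ G.B).Nonempty else (C ∩ M p.1 ∩ G.W).Nonempty

/-- `C` is the vertex set of a biclique of `G`. -/
def IsBicliqueVS (G : BipGraph V) (C : Finset V) : Prop :=
  ∃ S T, IsBiclique G S T ∧ S ∪ T = C

/-- `C` is the vertex set of a maximal biclique of `G`. -/
def MaximalBicliqueVS (G : BipGraph V) (C : Finset V) : Prop :=
  IsBicliqueVS G C ∧ ∀ D, IsBicliqueVS G D → C ⊆ D → C = D

/-- `D_C(Mᵢ)`, the maxbisize set of the bimodule `Mᵢ` with respect to a maximal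
biclique `C` of the quotient graph. -/
def DC (G : BipGraph V) {k : ℕ} (M : Fin k → Finset V)
    (C : Finset (Fin k × Bool)) (i : Fin k) : Set (ℕ × ℕ) :=
  if (i, true) ∈ C then
    if (i, false) ∈ C then DD (induce G (M i))
    else {((M i ∩ G.B).card, 0)}
  else
    if (i, false) ∈ C then {(0, (M i ∩ G.W).card)}
    else ∅

/-- `f 0 ⊕ f 1 ⊕ … ⊕ f (k-1)` (with the convention that `∅` is neutral for `⊕`). -/
noncomputable def oplusFold {k : ℕ} (f : Fin k → Set (ℕ × ℕ)) : Set (ℕ × ℕ) :=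
  (List.finRange k).foldr (fun i acc => oplus (f i) acc) ∅

/-- The path on `n` vertices `0, 1, …, n-1`, two-colored alternately; the black
vertices are those whose index has parity `r`. -/
def pathGraph (n r : ℕ) : BipGraph (Fin n) where
  B := Finset.univ.filter fun i => (i : ℕ) % 2 = r
  W := Finset.univ.filter fun i => (i : ℕ) % 2 ≠ r
  disj := by
    rw [Finset.disjoint_left]
    intro i hi hj
    simp only [Finset.mem_filter, Finset.mem_univ, true_and] at hi hj
    exact hj hi
  E := {e | (e.1 : ℕ) % 2 = r ∧ ((e.1 : ℕ) + 1 = (e.2 : ℕ) ∨ (e.2 : ℕ) + 1 = (e.1 : ℕ))}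
  E_sub := fun e he => by
    obtain ⟨h1, h2⟩ := he
    refine ⟨?_, ?_⟩ <;> simp only [Finset.mem_filter, Finset.mem_univ, true_and]
    · exact h1
    · omega

/-- The cycle on `n` vertices `0, 1, …, n-1` (consecutive vertices modulo `n` adjacent),
two-colored alternately; the black vertices are those whose index has parity `r`. -/
def cycleGraph (n r : ℕ) : BipGraph (Fin n) where
  B := Finset.univ.filter fun i => (i : ℕ) % 2 = r
  W := Finset.univ.filter fun i => (i : ℕ) % 2 ≠ r
  disj := by
    rw [Finset.disjoint_left]
    intro i hi hj
    simp only [Finset.mem_filter, Finset.mem_univ, true_and] at hi hj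
    exact hj hi
  E := {e | (e.1 : ℕ) % 2 = r ∧ (e.2 : ℕ) % 2 ≠ r ∧
       (((e.1 : ℕ) + 1) % n = (e.2 : ℕ) ∨ ((e.2 : ℕ) + 1) % n = (e.1 : ℕ))}
  E_sub := fun e he => by
    obtain ⟨h1, h2, _⟩ := he
    refine ⟨?_, ?_⟩ <;> simp only [Finset.mem_filter, Finset.mem_univ, true_and]
    · exact h1
    · exact h2

/-- The bipartite complement of `G`. -/
def bipCompl (G : BipGraph V) : BipGraph V where
  B := G.B
  W := G.W
  disj := G.disj
  E := {e | e.1 ∈ G.B ∧ e.2 ∈ G.W ∧ e ∉ G.E}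
  E_sub := fun _ he => ⟨he.1, he.2.1⟩

/-- `x` and `y` are adjacent in `G`. -/
def Adjv (G : BipGraph V) (x y : V) : Prop := (x, y) ∈ G.E ∨ (y, x) ∈ G.E

/-- `G` is twin-free: no two distinct vertices have the same set of neighbors. -/
def TwinFree (G : BipGraph V) : Prop :=
  ∀ x ∈ G.B ∪ G.W, ∀ y ∈ G.B ∪ G.W,
    ({z | Adjv G x z} = {z | Adjv G y z}) → x = y

/-- The edges of the skew star `Star_{1,2,3}`: a path `0-1-2-3-4-5` plus a vertex `6`
adjacent only to `2`. -/
def starEdges : List (ℕ × ℕ) := [(0, 1), (1, 2), (2, 3), (3, 4), (4, 5), (2, 6)]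

/-- `G` contains no induced `Star_{1,2,3}`. -/
def Star123Free (G : BipGraph V) : Prop :=
  ¬ ∃ v : Fin 7 → V, Function.Injective v ∧ (∀ i, v i ∈ G.B ∪ G.W) ∧
    ∀ i j : Fin 7, Adjv G (v i) (v j) ↔
      (((i : ℕ), (j : ℕ)) ∈ starEdges ∨ ((j : ℕ), (i : ℕ)) ∈ starEdges)

/-- Every vertex of `G` has degree at most 2 (equivalent to `K_{1,3}`-freeness for
bipartite graphs). -/
def MaxDeg2 (G : BipGraph V) : Prop :=
  ∀ x ∈ G.B ∪ G.W, ({y | Adjv G x y}).ncard ≤ 2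
/-- Proposition 15 of the paper. -/
theorem corr_biclique_and_maximal_cover {V : Type} [DecidableEq V] (G : BipGraph V)
    (k : ℕ) (M : Fin k → Finset V)
    (hne : ∀ i, (M i).Nonempty)
    (hdisj : ∀ i j, i ≠ j → Disjoint (M i) (M j))
    (hcover : Finset.univ.biUnion M = G.B ∪ G.W)
    (hbim : ∀ i, Bimodule G (M i))
    (S T : Finset V) (hbc : IsBiclique G S T) :
    IsBicliqueVS (quotientGraph G M) (Corr G M (S ∪ T)) ∧
    ∃ C', MaximalBicliqueVS (quotientGraph G M) C' ∧ S ∪ T ⊆ Rroc G M C' := by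
  classical
  set H := quotientGraph G M with hH
  set C := Corr G M (S ∪ T) with hC
  obtain ⟨hSB, hTW, hST⟩ := hbc
  have hmemS : ∀ x ∈ S ∪ T, x ∈ G.B → x ∈ S := by
    intro x hx hxB
    rcases Finset.mem_union.mp hx with h | h
    · exact h
    · exact absurd hxB (Finset.disjoint_right.mp G.disj (hTW h))
  have hmemT : ∀ x ∈ S ∪ T, x ∈ G.W → x ∈ T := by
    intro x hx hxW
    rcases Finset.mem_union.mp hx with h | h
    · exact absurd hxW (Finset.disjoint_left.mp G.disj (hSB h))
    · exact h
  have hCbc : IsBicliqueVS H C := by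
    refine ⟨C.filter (fun p => p.2 = true), C.filter (fun p => p.2 = false), ⟨?_, ?_, ?_⟩, ?_⟩
    · intro p hp
      simp only [Finset.mem_filter] at hp
      obtain ⟨hpC, hpt⟩ := hp
      simp only [hC, Corr, Finset.mem_filter, Finset.mem_univ, true_and, hpt, if_true] at hpC
      obtain ⟨x, hx⟩ := hpC
      simp only [Finset.mem_inter] at hx
      simp only [hH, quotientGraph, Finset.mem_filter, Finset.mem_univ, true_and]
      exact ⟨hpt, ⟨x, Finset.mem_inter.mpr ⟨hx.1.2, hx.2⟩⟩⟩
    · intro p hp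
      simp only [Finset.mem_filter] at hp
      obtain ⟨hpC, hpt⟩ := hp
      simp only [hC, Corr, Finset.mem_filter, Finset.mem_univ, true_and, hpt,
        if_false, Bool.false_eq_true] at hpC
      obtain ⟨x, hx⟩ := hpC
      simp only [Finset.mem_inter] at hx
      simp only [hH, quotientGraph, Finset.mem_filter, Finset.mem_univ, true_and]
      exact ⟨hpt, ⟨x, Finset.mem_inter.mpr ⟨hx.1.2, hx.2⟩⟩⟩
    · intro b hb w hw
      simp only [Finset.mem_filter] at hb hw
      obtain ⟨hbC, hbt⟩ := hb
      obtain ⟨hwC, hwt⟩ := hw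
      simp only [hC, Corr, Finset.mem_filter, Finset.mem_univ, true_and, hbt, if_true] at hbC
      simp only [hC, Corr, Finset.mem_filter, Finset.mem_univ, true_and, hwt,
        if_false, Bool.false_eq_true] at hwC
      obtain ⟨x, hx⟩ := hbC
      obtain ⟨y, hy⟩ := hwC
      simp only [Finset.mem_inter] at hx hy
      have hxS : x ∈ S := hmemS x hx.1.1 hx.2
      have hyT : y ∈ T := hmemT y hy.1.1 hy.2
      refine ⟨hbt, hwt, x, Finset.mem_inter.mpr ⟨hx.1.2, hx.2⟩,
        y, Finset.mem_inter.mpr ⟨hy.1.2, hy.2⟩, hST x hxS y hyT⟩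
    · ext p
      simp only [Finset.mem_union, Finset.mem_filter]
      cases hp : p.2 <;> simp [hp]
  have hsub : S ∪ T ⊆ Rroc G M C := by
    intro x hx
    have hxBW : x ∈ G.B ∪ G.W := by
      rcases Finset.mem_union.mp hx with h | h
      · exact Finset.mem_union_left _ (hSB h)
      · exact Finset.mem_union_right _ (hTW h)
    have : x ∈ Finset.univ.biUnion M := hcover ▸ hxBW
    obtain ⟨i, -, hxi⟩ := Finset.mem_biUnion.mp this
    rcases Finset.mem_union.mp hxBW with hxB | hxW
    · have hmem : (i, true) ∈ C := by
        simp only [hC, Corr, Finset.mem_filter, Finset.mem_univ, true_and, if_true]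
        exact ⟨x, by simp [hx, hxi, hxB]⟩
      refine Finset.mem_biUnion.mpr ⟨(i, true), hmem, ?_⟩
      simp [Finset.mem_inter, hxi, hxB]
    · have hmem : (i, false) ∈ C := by
        simp only [hC, Corr, Finset.mem_filter, Finset.mem_univ, true_and,
          if_false, Bool.false_eq_true]
        exact ⟨x, by simp [hx, hxi, hxW]⟩
      refine Finset.mem_biUnion.mpr ⟨(i, false), hmem, ?_⟩
      simp [Finset.mem_inter, hxi, hxW]
  refine ⟨hCbc, ?_⟩
  obtain ⟨C', hC'mem, hC'max⟩ := Finset.exists_max_image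
    ((Finset.univ : Finset (Fin k × Bool)).powerset.filter
      (fun D => IsBicliqueVS H D ∧ C ⊆ D)) Finset.card
    ⟨C, by simp only [Finset.mem_filter, Finset.mem_powerset]
           exact ⟨Finset.subset_univ C, hCbc, subset_rfl⟩⟩
  simp only [Finset.mem_filter, Finset.mem_powerset] at hC'mem
  obtain ⟨-, hC'bc, hCC'⟩ := hC'mem
  refine ⟨C', ⟨hC'bc, ?_⟩, hsub.trans (Finset.biUnion_subset_biUnion_of_subset_left _ hCC')⟩
  intro D hD hsubD
  have hDmem : D ∈ (Finset.univ : Finset (Fin k × Bool)).powerset.filter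
      (fun D => IsBicliqueVS H D ∧ C ⊆ D) := by
    simp only [Finset.mem_filter, Finset.mem_powerset]
    exact ⟨Finset.subset_univ D, hD, hCC'.trans hsubD⟩
  exact Finset.eq_of_subset_of_card_le hsubD (hC'max D hDmem)
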